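/- Let α_0 ⊆ α_1 ⊆ … ⊆ α_{k−2} be nested subspaces of ℂⁿ with orthogonal projections π_{α_j}. Then the product of unitary loops ∏_{j=0}^{k−2} (π_{α_j} + λ π_{α_j}^⊥) applied to the Hardy space ℋ₊ equals α_0 + λα_1 + ⋯ + λ^{k−2} α_{k−2} + λ^{k−1} ℋ₊, i.e., the set of f ∈ ℋ₊ whose m-th Fourier coefficient lies in α_m for 0 ≤ m ≤ k−2. -/

import Mathlib

open MeasureTheory Complex
open scoped Matrix

noncomputable section

local instance : Fact (0 < 2 * Real.pi) := ⟨by positivity⟩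

/-- The circle `S¹` parametrized as `ℝ/2πℤ`; the point `θ` corresponds to `λ = e^{iθ} ∈ S¹`. -/
abbrev Tc : Type := AddCircle (2 * Real.pi)

/-- `ℂⁿ` as a Hilbert space. -/
abbrev Ecn (n : ℕ) : Type := EuclideanSpace ℂ (Fin n)

/-- The Hilbert space `L²(S¹, ℂⁿ)`. -/
abbrev H2 (n : ℕ) : Type := Lp (Ecn n) 2 (volume : Measure Tc)

/-- The Hardy space `ℋ₊ ⊂ L²(S¹,ℂⁿ)`: elements whose negative Fourier coefficients vanish. -/
def Hardy (n : ℕ) : Set (H2 n) :=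
  {f | ∀ m : ℤ, m < 0 → fourierCoeff (f : Tc → Ecn n) m = 0}

/-- The subset `Φℋ₊` of `L²(S¹,ℂⁿ)`: the image of the Hardy space under pointwise
multiplication by the matrix-valued function `Φ`. -/
def mulHardy {n : ℕ} (Φ : Tc → Matrix (Fin n) (Fin n) ℂ) : Set (H2 n) :=
  {g | ∃ f ∈ Hardy n, (g : Tc → Ecn n) =ᵐ[volume] fun θ =>
    (WithLp.equiv 2 (∀ _ : Fin n, ℂ)).symm
      ((Φ θ).mulVec (WithLp.equiv 2 (∀ _ : Fin n, ℂ) ((f : Tc → Ecn n) θ)))}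

/-- The orthogonal projection onto `β`, as an endomorphism of `ℂⁿ`. -/
def projL {n : ℕ} (β : Submodule ℂ (Ecn n)) : Ecn n →L[ℂ] Ecn n :=
  β.subtypeL.comp β.orthogonalProjectionOnto

/- STATEMENT 12: Let α_0 ⊆ α_1 ⊆ … ⊆ α_{k−2} be nested subspaces of ℂⁿ with orthogonal
projections π_{α_j}. Then the product of unitary loops ∏_{j=0}^{k−2} (π_{α_j} + λ π_{α_j}^⊥)
applied to the Hardy space ℋ₊ equals α_0 + λα_1 + ⋯ + λ^{k−2} α_{k−2} + λ^{k−1} ℋ₊, i.e.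
the set of f ∈ ℋ₊ whose m-th Fourier coefficient lies in α_m for 0 ≤ m ≤ k−2. -/

namespace Stmt12
set_option synthInstance.maxHeartbeats 1000000
set_option maxHeartbeats 1000000

open AddCircle

variable {n : ℕ}

lemma haar_eq_smul_volume :
    (haarAddCircle : Measure Tc) = (ENNReal.ofReal (2 * Real.pi))⁻¹ • (volume : Measure Tc) := by
  rw [volume_eq_smul_haarAddCircle, smul_smul,
    ENNReal.inv_mul_cancel (ENNReal.ofReal_pos.mpr (by positivity)).ne' ENNReal.ofReal_ne_top,
    one_smul]

lemma ae_volume_imp {p : Tc → Prop} (h : ∀ᵐ θ ∂(volume : Measure Tc), p θ) :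
    ∀ᵐ θ ∂(haarAddCircle : Measure Tc), p θ := by
  rw [haar_eq_smul_volume]; exact Measure.ae_smul_measure h _

lemma integrable_haar (g : H2 n) :
    Integrable (g : Tc → Ecn n) (haarAddCircle : Measure Tc) := by
  have h := (Lp.memLp g).integrable (by norm_num)
  rw [haar_eq_smul_volume]
  exact h.smul_measure (by simp [Real.pi_pos, not_le.mpr Real.pi_pos])

lemma fourierCoeff_congr {f g : Tc → Ecn n} (h : f =ᵐ[volume] g) (q : ℤ) :
    fourierCoeff f q = fourierCoeff g q := by
  unfold fourierCoeff
  exact integral_congr_ae ((ae_volume_imp h).mono fun θ hθ => by simp only [hθ])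

lemma integrable_fourier_smul (p : ℤ) {F : Tc → Ecn n}
    (hF : Integrable F (haarAddCircle : Measure Tc)) :
    Integrable (fun θ => (fourier p θ : ℂ) • F θ) (haarAddCircle : Measure Tc) := by
  refine hF.norm.mono' (((map_continuous (fourier p)).aestronglyMeasurable).smul hF.1)
    (Filter.Eventually.of_forall fun θ => ?_)
  rw [norm_smul]
  simp [Circle.norm_coe]

lemma fourierCoeff_clm (c : Ecn n →L[ℂ] Ecn n) {F : Tc → Ecn n}
    (hF : Integrable F (haarAddCircle : Measure Tc)) (q : ℤ) :
    fourierCoeff (fun θ => c (F θ)) q = c (fourierCoeff F q) := by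
  unfold fourierCoeff
  simp_rw [← _root_.map_smul c]
  exact c.integral_comp_comm (integrable_fourier_smul (-q) hF)

lemma fourierCoeff_fourier_smul (p : ℤ) (F : Tc → Ecn n) (q : ℤ) :
    fourierCoeff (fun θ => (fourier p θ : ℂ) • F θ) q = fourierCoeff F (q - p) := by
  unfold fourierCoeff
  simp_rw [smul_smul, ← fourier_add]
  have : -q + p = -(q - p) := by ring
  rw [this]

lemma fourierCoeff_add' {F G : Tc → Ecn n}
    (hF : Integrable F (haarAddCircle : Measure Tc))
    (hG : Integrable G (haarAddCircle : Measure Tc)) (q : ℤ) :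
    fourierCoeff (fun θ => F θ + G θ) q = fourierCoeff F q + fourierCoeff G q := by
  unfold fourierCoeff
  simp_rw [smul_add]
  exact integral_add (integrable_fourier_smul (-q) hF) (integrable_fourier_smul (-q) hG)

lemma fourierCoeff_combo (c d : Ecn n →L[ℂ] Ecn n) (p : ℤ) (g : H2 n) (q : ℤ) :
    fourierCoeff (fun θ => c ((g : Tc → Ecn n) θ) + (fourier p θ : ℂ) • d ((g : Tc → Ecn n) θ)) q
      = c (fourierCoeff (g : Tc → Ecn n) q) + d (fourierCoeff (g : Tc → Ecn n) (q - p)) := by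
  have hg := integrable_haar g
  have hc : Integrable (fun θ => c ((g : Tc → Ecn n) θ)) (haarAddCircle : Measure Tc) :=
    c.integrable_comp hg
  have hd : Integrable (fun θ => d ((g : Tc → Ecn n) θ)) (haarAddCircle : Measure Tc) :=
    d.integrable_comp hg
  rw [fourierCoeff_add' hc (integrable_fourier_smul p hd), fourierCoeff_clm c hg,
    fourierCoeff_fourier_smul p _ q, fourierCoeff_clm d hg]

set_option synthInstance.maxHeartbeats 1000000 in
lemma memLp_apply {A : Tc → (Ecn n →L[ℂ] Ecn n)} (hA : Continuous A) {C : ℝ}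
    (hC : ∀ θ, ‖A θ‖ ≤ C) (g : H2 n) :
    MemLp (fun θ => A θ ((g : Tc → Ecn n) θ)) 2 (volume : Measure Tc) := by
  have hsm : AEStronglyMeasurable (fun θ => A θ ((g : Tc → Ecn n) θ)) volume := by
    have hcont : Continuous fun p : (Ecn n →L[ℂ] Ecn n) × Ecn n => p.1 p.2 :=
      isBoundedBilinearMap_apply.continuous
    exact hcont.comp_aestronglyMeasurable
      ((hA.aestronglyMeasurable).prodMk (Lp.aestronglyMeasurable g))
  refine (Lp.memLp g).of_le_mul (c := C) hsm (Filter.Eventually.of_forall fun θ => ?_)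
  calc ‖A θ ((g : Tc → Ecn n) θ)‖ ≤ ‖A θ‖ * ‖(g : Tc → Ecn n) θ‖ := (A θ).le_opNorm _
    _ ≤ C * ‖(g : Tc → Ecn n) θ‖ :=
        mul_le_mul_of_nonneg_right (hC θ) (norm_nonneg _)

lemma projL_mem (β : Submodule ℂ (Ecn n)) (x : Ecn n) : projL β x ∈ β :=
  (β.orthogonalProjectionOnto x).2

lemma projL_eq_self {β : Submodule ℂ (Ecn n)} {x : Ecn n} (hx : x ∈ β) : projL β x = x :=
  β.starProjection_eq_self_iff.mpr hx

lemma projL_idem (β : Submodule ℂ (Ecn n)) (x : Ecn n) : projL β (projL β x) = projL β x :=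
  projL_eq_self (projL_mem β x)

lemma loop_inv_apply (β : Submodule ℂ (Ecn n)) {a b : ℂ} (hab : a * b = 1) (x : Ecn n) :
    (projL β + a • (1 - projL β)) ((projL β + b • (1 - projL β)) x) = x := by
  simp only [ContinuousLinearMap.add_apply, ContinuousLinearMap.smul_apply,
    ContinuousLinearMap.sub_apply, ContinuousLinearMap.one_apply, map_add, _root_.map_smul,
    map_sub, projL_idem, sub_self, smul_zero, add_zero, zero_add, sub_zero]
  rw [add_sub_cancel_left, smul_smul]
  rw [mul_comm] at hab
  rw [hab, one_smul, add_sub_cancel]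


lemma loop_norm_le (β : Submodule ℂ (Ecn n)) (θ : Tc) :
    ‖projL β + (AddCircle.toCircle θ : ℂ) • (1 - projL β)‖
      ≤ ‖projL β‖ + ‖(1 : Ecn n →L[ℂ] Ecn n) - projL β‖ := by
  refine le_trans (norm_add_le _ _) ?_
  gcongr
  refine le_trans (norm_smul_le ((AddCircle.toCircle θ : ℂ)) (1 - projL β)) ?_
  simp [Circle.norm_coe]

lemma prod_loop_norm_le (L : List (Submodule ℂ (Ecn n))) (θ : Tc) :
    ‖((L.map fun β => projL β + (AddCircle.toCircle θ : ℂ) • (1 - projL β)).prod :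
        Ecn n →L[ℂ] Ecn n)‖
      ≤ (L.map fun β => ‖projL β‖ + ‖(1 : Ecn n →L[ℂ] Ecn n) - projL β‖).prod := by
  induction L with
  | nil =>
    simp only [List.map_nil, List.prod_nil]
    rw [ContinuousLinearMap.one_def]
    exact ContinuousLinearMap.norm_id_le
  | cons β L ih =>
    simp only [List.map_cons, List.prod_cons]
    refine le_trans (norm_mul_le _ _) ?_
    exact mul_le_mul (loop_norm_le β θ) ih (norm_nonneg _)
      (by positivity)

lemma continuous_loop (β : Submodule ℂ (Ecn n)) :
    Continuous fun θ : Tc => projL β + (AddCircle.toCircle θ : ℂ) • (1 - projL β) := by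
  refine continuous_const.add (Continuous.smul (f := fun θ : Tc => (AddCircle.toCircle θ : ℂ)) ?_ continuous_const)
  exact continuous_subtype_val.comp AddCircle.continuous_toCircle

lemma continuous_prod_loop (L : List (Submodule ℂ (Ecn n))) :
    Continuous fun θ : Tc =>
      ((L.map fun β => projL β + (AddCircle.toCircle θ : ℂ) • (1 - projL β)).prod :
        Ecn n →L[ℂ] Ecn n) := by
  induction L with
  | nil => simpa using continuous_const
  | cons β L ih =>
    simp only [List.map_cons, List.prod_cons]
    exact (continuous_loop β).mul ih

lemma key (L : List (Submodule ℂ (Ecn n))) (hL : L.Pairwise (· ≤ ·)) :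
    {g : H2 n | ∃ f ∈ Hardy n, (g : Tc → Ecn n) =ᵐ[volume] fun θ =>
        ((L.map fun β => projL β + (AddCircle.toCircle θ : ℂ) • (1 - projL β)).prod :
          Ecn n →L[ℂ] Ecn n) ((f : Tc → Ecn n) θ)}
      = {f : H2 n | f ∈ Hardy n ∧
          ∀ (m : ℕ) (hm : m < L.length), fourierCoeff (f : Tc → Ecn n) (m : ℤ) ∈ L[m]} := by
  induction L with
  | nil =>
    ext g
    simp only [List.map_nil, List.prod_nil, Set.mem_setOf_eq, List.length_nil]
    constructor
    · rintro ⟨f, hf, hae⟩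
      have hg : g = f := Lp.ext (by simpa using hae)
      exact ⟨hg ▸ hf, fun m hm => by omega⟩
    · rintro ⟨hg, -⟩
      exact ⟨g, hg, by simp⟩
  | cons β L ih =>
    obtain ⟨hb, hL'⟩ := List.pairwise_cons.mp hL
    have hset := ih hL'
    ext g
    simp only [Set.mem_setOf_eq, List.map_cons, List.prod_cons]
    constructor
    · rintro ⟨f, hf, hae⟩
      have hmem : MemLp (fun θ =>
          ((L.map fun β => projL β + (AddCircle.toCircle θ : ℂ) • (1 - projL β)).prod :
            Ecn n →L[ℂ] Ecn n) ((f : Tc → Ecn n) θ)) 2 (volume : Measure Tc) :=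
        memLp_apply (continuous_prod_loop L) (prod_loop_norm_le L) f
      set h : H2 n := hmem.toLp _ with hh_def
      have hh : (h : Tc → Ecn n) =ᵐ[volume] fun θ =>
          ((L.map fun β => projL β + (AddCircle.toCircle θ : ℂ) • (1 - projL β)).prod :
            Ecn n →L[ℂ] Ecn n) ((f : Tc → Ecn n) θ) := hmem.coeFn_toLp
      have hhR : h ∈ Hardy n ∧ ∀ (m : ℕ) (hm : m < L.length),
          fourierCoeff (h : Tc → Ecn n) (m : ℤ) ∈ L[m] := by
        have : h ∈ {g : H2 n | ∃ f ∈ Hardy n, (g : Tc → Ecn n) =ᵐ[volume] fun θ =>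
            ((L.map fun β => projL β + (AddCircle.toCircle θ : ℂ) • (1 - projL β)).prod :
              Ecn n →L[ℂ] Ecn n) ((f : Tc → Ecn n) θ)} := ⟨f, hf, hh⟩
        rw [hset] at this
        exact this
      have hgae : (g : Tc → Ecn n) =ᵐ[volume] fun θ =>
          projL β ((h : Tc → Ecn n) θ)
            + (fourier 1 θ : ℂ) • (1 - projL β) ((h : Tc → Ecn n) θ) := by
        filter_upwards [hae, hh] with θ h1 h2
        rw [h1, ContinuousLinearMap.mul_apply, ← h2]
        simp [fourier_one]
      have hcoeff : ∀ q : ℤ, fourierCoeff (g : Tc → Ecn n) q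
          = projL β (fourierCoeff (h : Tc → Ecn n) q)
            + (1 - projL β) (fourierCoeff (h : Tc → Ecn n) (q - 1)) := fun q => by
        rw [fourierCoeff_congr hgae q, fourierCoeff_combo (projL β) (1 - projL β) 1 h q]
      have hgH : g ∈ Hardy n := by
        intro m hm
        rw [hcoeff m, hhR.1 m hm, hhR.1 (m - 1) (by omega), map_zero, map_zero, add_zero]
      refine ⟨hgH, fun m hm => ?_⟩
      cases m with
      | zero =>
        have h0 : fourierCoeff (h : Tc → Ecn n) ((0 : ℕ) - 1 : ℤ) = 0 := hhR.1 _ (by omega)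
        rw [hcoeff, h0, map_zero, add_zero]
        simpa using projL_mem β _
      | succ m' =>
        have hm' : m' < L.length := by simpa using hm
        have hβγ : β ≤ L[m'] := hb _ (List.getElem_mem _)
        have h1 : fourierCoeff (h : Tc → Ecn n) (((m' + 1 : ℕ) : ℤ) - 1) ∈ L[m'] := by
          have := hhR.2 m' hm'
          convert this using 2
          all_goals { push_cast; try ring }
        rw [hcoeff]
        simp only [List.getElem_cons_succ]
        refine Submodule.add_mem _ (hβγ (projL_mem β _)) ?_
        simpa using Submodule.sub_mem _ h1 (hβγ (projL_mem β _))
    · rintro ⟨hgH, hcond⟩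
      have hmem : MemLp (fun θ =>
          (projL β + (fourier (-1) θ : ℂ) • (1 - projL β)) ((g : Tc → Ecn n) θ)) 2
          (volume : Measure Tc) := by
        refine memLp_apply (A := fun θ => projL β + (fourier (-1) θ : ℂ) • (1 - projL β))
          ?_ (C := ‖projL β‖ + ‖(1 : Ecn n →L[ℂ] Ecn n) - projL β‖) (fun θ => ?_) g
        · exact continuous_const.add
            ((map_continuous (fourier (-1))).smul continuous_const)
        · refine le_trans (norm_add_le _ _) ?_
          gcongr
          refine le_trans (norm_smul_le ((fourier (-1) θ : ℂ)) (1 - projL β)) ?_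
          simp [Circle.norm_coe]
      set h : H2 n := hmem.toLp _ with hh_def
      have hh : (h : Tc → Ecn n) =ᵐ[volume] fun θ =>
          (projL β + (fourier (-1) θ : ℂ) • (1 - projL β)) ((g : Tc → Ecn n) θ) :=
        hmem.coeFn_toLp
      have hcoeffh : ∀ q : ℤ, fourierCoeff (h : Tc → Ecn n) q
          = projL β (fourierCoeff (g : Tc → Ecn n) q)
            + (1 - projL β) (fourierCoeff (g : Tc → Ecn n) (q + 1)) := fun q => by
        have hh' : (h : Tc → Ecn n) =ᵐ[volume] fun θ =>
            projL β ((g : Tc → Ecn n) θ)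
              + (fourier (-1) θ : ℂ) • (1 - projL β) ((g : Tc → Ecn n) θ) := by
          filter_upwards [hh] with θ h1
          rw [h1]; simp
        rw [fourierCoeff_congr hh' q, fourierCoeff_combo (projL β) (1 - projL β) (-1) g q,
          sub_neg_eq_add]
      have hg0 : fourierCoeff (g : Tc → Ecn n) ((0 : ℕ) : ℤ) ∈ β := by
        exact hcond 0 (by simp)
      have hhH : h ∈ Hardy n := by
        intro m hm
        rw [hcoeffh m, hgH m hm]
        rcases lt_or_ge (m + 1) 0 with h1 | h1
        · rw [hgH _ h1, map_zero, map_zero, add_zero]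
        · have hm0 : m = -1 := by omega
          subst hm0
          simp only [neg_add_cancel, map_zero, zero_add]
          have : projL β (fourierCoeff (g : Tc → Ecn n) 0)
              = fourierCoeff (g : Tc → Ecn n) 0 := projL_eq_self (by simpa using hg0)
          simp [ContinuousLinearMap.sub_apply, this]
      have hhcond : ∀ (m : ℕ) (hm : m < L.length),
          fourierCoeff (h : Tc → Ecn n) (m : ℤ) ∈ L[m] := by
        intro m hm
        have hβγ : β ≤ L[m] := hb _ (List.getElem_mem _)
        have hg1 : fourierCoeff (g : Tc → Ecn n) ((m : ℤ) + 1) ∈ L[m] := by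
          have := hcond (m + 1) (by simp; omega)
          simp only [List.getElem_cons_succ] at this
          convert this using 2
          all_goals { push_cast; try ring }
        rw [hcoeffh]
        refine Submodule.add_mem _ (hβγ (projL_mem β _)) ?_
        simpa using Submodule.sub_mem _ hg1 (hβγ (projL_mem β _))
      have : h ∈ {g : H2 n | ∃ f ∈ Hardy n, (g : Tc → Ecn n) =ᵐ[volume] fun θ =>
          ((L.map fun β => projL β + (AddCircle.toCircle θ : ℂ) • (1 - projL β)).prod :
            Ecn n →L[ℂ] Ecn n) ((f : Tc → Ecn n) θ)} := by
        rw [hset]; exact ⟨hhH, hhcond⟩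
      obtain ⟨f, hf, hfe⟩ := this
      refine ⟨f, hf, ?_⟩
      filter_upwards [hh, hfe] with θ h1 h2
      rw [ContinuousLinearMap.mul_apply, ← h2, h1]
      have hab : (AddCircle.toCircle θ : ℂ) * (fourier (-1) θ : ℂ) = 1 := by
        rw [← fourier_one (x := θ), ← fourier_add']
        simp
      exact (loop_inv_apply β hab _).symm

end Stmt12

theorem product_of_projection_loops_applied_to_hardy_space
    (n k : ℕ) (hk : 2 ≤ k)
    (α : Fin (k - 1) → Submodule ℂ (Ecn n)) (hmono : Monotone α) :
    {g : H2 n | ∃ f ∈ Hardy n, (g : Tc → Ecn n) =ᵐ[volume] fun θ =>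
        (((List.finRange (k - 1)).map (fun j =>
            projL (α j) + (AddCircle.toCircle θ : ℂ) • (1 - projL (α j)))).prod :
          Ecn n →L[ℂ] Ecn n) ((f : Tc → Ecn n) θ)}
      = {f : H2 n | f ∈ Hardy n ∧
          ∀ m : Fin (k - 1), fourierCoeff (f : Tc → Ecn n) ((m : ℕ) : ℤ) ∈ α m} := by
  have hsorted : ((List.finRange (k - 1)).map α).Pairwise (· ≤ ·) :=
    List.Pairwise.map α (fun a b h => hmono h.le) (List.pairwise_lt_finRange (k - 1))
  have hkey := Stmt12.key ((List.finRange (k - 1)).map α) hsorted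
  simp only [List.map_map] at hkey
  have heq : ((fun β => projL β) ∘ α : Fin (k-1) → (Ecn n →L[ℂ] Ecn n)) = fun j => projL (α j) := rfl
  rw [show {g : H2 n | ∃ f ∈ Hardy n, (g : Tc → Ecn n) =ᵐ[volume] fun θ =>
        (((List.finRange (k - 1)).map (fun j =>
            projL (α j) + (AddCircle.toCircle θ : ℂ) • (1 - projL (α j)))).prod :
          Ecn n →L[ℂ] Ecn n) ((f : Tc → Ecn n) θ)}
      = {g : H2 n | ∃ f ∈ Hardy n, (g : Tc → Ecn n) =ᵐ[volume] fun θ =>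
        (((List.finRange (k - 1)).map ((fun β => projL β + (AddCircle.toCircle θ : ℂ) • (1 - projL β)) ∘ α)).prod :
          Ecn n →L[ℂ] Ecn n) ((f : Tc → Ecn n) θ)} from rfl, hkey]
  ext f
  simp only [Set.mem_setOf_eq, List.length_map, List.length_finRange, List.getElem_map,
    List.getElem_finRange, Fin.cast_mk]
  constructor
  · rintro ⟨h1, h2⟩
    exact ⟨h1, fun m => by simpa using h2 (m : ℕ) m.2⟩
  · rintro ⟨h1, h2⟩
    exact ⟨h1, fun m hm => by simpa using h2 ⟨m, hm⟩⟩


end
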